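/- Let μ be a probability measure on [0,2π) with ∫₀^{2π} e^{ix} dμ(x) = 0 and Z_μ(t) = ∫₀^t exp(i F_μ⁻¹(u)) du. If there exist t₁ < t₂ in [0,1) with Z_μ(t₁) = Z_μ(t₂), then μ is supported on two antipodal points: there is θ with F_μ⁻¹(t₂) = π + F_μ⁻¹(t₁) and μ({F_μ⁻¹(t₁)}) = μ({F_μ⁻¹(t₂)}) = 1/2. -/

import Mathlib

open MeasureTheory Real Set

/-- Cumulative distribution function `F_μ(x) = μ([0,x])`. -/
noncomputable def cdf' (μ : Measure ℝ) (x : ℝ) : ℝ := (μ (Set.Icc 0 x)).toReal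

/-- Generalized inverse `F_μ⁻¹(y) = inf {x ≥ 0 : F_μ(x) ≥ y}`. -/
noncomputable def qf (μ : Measure ℝ) (y : ℝ) : ℝ := sInf {x : ℝ | 0 ≤ x ∧ y ≤ cdf' μ x}

variable {μ : Measure ℝ} [IsProbabilityMeasure μ]

lemma cdf'_mono : Monotone (cdf' μ) := by
  intro a b hab
  exact ENNReal.toReal_mono (measure_ne_top μ _) (measure_mono (Icc_subset_Icc le_rfl hab))

lemma cdf'_le_one (x : ℝ) : cdf' μ x ≤ 1 := by
  have := prob_le_one (μ := μ) (s := Icc 0 x)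
  simpa [cdf'] using ENNReal.toReal_mono (by simp) this

lemma measure_Ico_eq_one (hsupp : μ (Set.Ico 0 (2*π))ᶜ = 0) : μ (Set.Ico 0 (2*π)) = 1 := by
  have h := measure_add_measure_compl (μ := μ) (s := Ico 0 (2*π)) measurableSet_Ico
  rw [hsupp, add_zero] at h
  simpa using h

lemma cdf'_two_pi (hsupp : μ (Set.Ico 0 (2*π))ᶜ = 0) : cdf' μ (2*π) = 1 := by
  have h1 : μ (Set.Ico 0 (2*π)) ≤ μ (Set.Icc 0 (2*π)) := measure_mono Ico_subset_Icc_self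
  rw [measure_Ico_eq_one hsupp] at h1
  have h2 : μ (Set.Icc 0 (2*π)) ≤ 1 := prob_le_one
  have : μ (Set.Icc 0 (2*π)) = 1 := le_antisymm h2 h1
  simp [cdf', this]

lemma qf_nonneg (y : ℝ) : 0 ≤ qf μ y :=
  Real.sInf_nonneg (fun x hx => hx.1)

lemma qf_set_nonempty (hsupp : μ (Set.Ico 0 (2*π))ᶜ = 0) {y : ℝ} (hy : y ≤ 1) :
    {x : ℝ | 0 ≤ x ∧ y ≤ cdf' μ x}.Nonempty :=
  ⟨2*π, by positivity, by rw [cdf'_two_pi hsupp]; exact hy⟩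

lemma qf_le (hsupp : μ (Set.Ico 0 (2*π))ᶜ = 0) {y x : ℝ} (hx : 0 ≤ x) (hy : y ≤ cdf' μ x) :
    qf μ y ≤ x :=
  csInf_le ⟨0, fun z hz => hz.1⟩ ⟨hx, hy⟩

lemma qf_mono (hsupp : μ (Set.Ico 0 (2*π))ᶜ = 0) {y₁ y₂ : ℝ} (h : y₁ ≤ y₂) (h2 : y₂ ≤ 1) :
    qf μ y₁ ≤ qf μ y₂ := by
  apply csInf_le_csInf ⟨0, fun z hz => hz.1⟩ (qf_set_nonempty hsupp h2)
  intro x hx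
  exact ⟨hx.1, le_trans h hx.2⟩

lemma cdf'_right_continuous (x : ℝ) (hx : 0 ≤ x) {u : ℝ}
    (h : ∀ n : ℕ, u ≤ cdf' μ (x + 1/(n+1))) : u ≤ cdf' μ x := by
  have hmono : Antitone (fun n : ℕ => Set.Icc (0:ℝ) (x + 1/(n+1))) := by
    intro m n hmn
    apply Icc_subset_Icc le_rfl
    gcongr
    all_goals exact_mod_cast hmn
  have hint : ⋂ n : ℕ, Set.Icc (0:ℝ) (x + 1/(n+1)) = Set.Icc 0 x := by
    ext z
    simp only [mem_iInter, mem_Icc]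
    constructor
    · rintro h
      refine ⟨(h 0).1, ?_⟩
      by_contra hc
      push_neg at hc
      obtain ⟨n, hn⟩ := exists_nat_one_div_lt (sub_pos.2 hc)
      have h2 := (h n).2
      linarith
    · rintro ⟨h0, h1⟩ n
      have hp : (0:ℝ) < 1/((n:ℝ)+1) := by positivity
      exact ⟨h0, by linarith⟩
  have htend : Filter.Tendsto (fun n : ℕ => μ (Set.Icc (0:ℝ) (x + 1/(n+1)))) Filter.atTop
      (nhds (μ (Set.Icc 0 x))) := by
    rw [← hint]
    exact tendsto_measure_iInter_atTop (fun n => (measurableSet_Icc).nullMeasurableSet) hmono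
      ⟨0, measure_ne_top μ _⟩
  have htr : Filter.Tendsto (fun n : ℕ => cdf' μ (x + 1/(n+1))) Filter.atTop
      (nhds (cdf' μ x)) :=
    (ENNReal.tendsto_toReal (measure_ne_top μ _)).comp htend
  exact ge_of_tendsto htr (Filter.Eventually.of_forall h)

lemma qf_galois (hsupp : μ (Set.Ico 0 (2*π))ᶜ = 0) {u x : ℝ} (hx : 0 ≤ x) (hu : u ≤ 1) :
    qf μ u ≤ x ↔ u ≤ cdf' μ x := by
  constructor
  · intro h
    apply cdf'_right_continuous x hx
    intro n
    have hp : (0:ℝ) < 1/((n:ℝ)+1) := by positivity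
    have hlt : qf μ u < x + 1/(n+1) := lt_of_le_of_lt h (by linarith)
    obtain ⟨z, hz, hzlt⟩ := exists_lt_of_csInf_lt (qf_set_nonempty hsupp hu) hlt
    exact le_trans hz.2 (cdf'_mono hzlt.le)
  · intro h
    exact qf_le hsupp hx h

lemma qf_lt_two_pi (hsupp : μ (Set.Ico 0 (2*π))ᶜ = 0) {u : ℝ} (hu : u < 1) :
    qf μ u < 2*π := by
  have hmono : Monotone (fun n : ℕ => Set.Icc (0:ℝ) (2*π - 1/(n+1))) := by
    intro m n hmn
    apply Icc_subset_Icc le_rfl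
    gcongr
    all_goals exact_mod_cast hmn
  have hun : ⋃ n : ℕ, Set.Icc (0:ℝ) (2*π - 1/(n+1)) = Set.Ico 0 (2*π) := by
    ext z
    simp only [mem_iUnion, mem_Icc, mem_Ico]
    constructor
    · rintro ⟨n, h0, h1⟩
      have hp : (0:ℝ) < 1/((n:ℝ)+1) := by positivity
      exact ⟨h0, lt_of_le_of_lt h1 (by linarith)⟩
    · rintro ⟨h0, h1⟩
      obtain ⟨n, hn⟩ := exists_nat_one_div_lt (sub_pos.2 h1)
      exact ⟨n, h0, by linarith⟩
  have htend : Filter.Tendsto (fun n : ℕ => μ (Set.Icc (0:ℝ) (2*π - 1/(n+1)))) Filter.atTop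
      (nhds (1 : ENNReal)) := by
    rw [← measure_Ico_eq_one (μ := μ) hsupp, ← hun]
    exact tendsto_measure_iUnion_atTop hmono
  have htr : Filter.Tendsto (fun n : ℕ => cdf' μ (2*π - 1/(n+1))) Filter.atTop (nhds 1) := by
    have := (ENNReal.tendsto_toReal (by simp)).comp htend
    simpa [Function.comp_def, cdf'] using this
  obtain ⟨n, hn⟩ : ∃ n : ℕ, u < cdf' μ (2*π - 1/(n+1)) := by
    by_contra hc
    push_neg at hc
    have := le_of_tendsto htr (Filter.Eventually.of_forall hc)
    linarith
  have hp : (0:ℝ) < 1/((n:ℝ)+1) := by positivity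
  have hp1 : 1/((n:ℝ)+1) ≤ 1 := by
    rw [div_le_one (by positivity)]
    simp [Nat.cast_nonneg]
  have hpos : 0 ≤ 2*π - 1/(n+1) := by
    have := Real.pi_gt_three
    linarith
  calc qf μ u ≤ 2*π - 1/(n+1) := qf_le hsupp hpos hn.le
  _ < 2*π := by linarith

lemma qf_le_two_pi (hsupp : μ (Set.Ico 0 (2*π))ᶜ = 0) {u : ℝ} (hu : u ≤ 1) :
    qf μ u ≤ 2*π :=
  qf_le hsupp (by positivity) (by rw [cdf'_two_pi hsupp]; exact hu)

/-! ### The monotone version of `qf` and the pushforward identity -/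

noncomputable def gq (μ : Measure ℝ) : ℝ → ℝ := fun u => qf μ (min u 1)

lemma gq_eq {u : ℝ} (hu : u ≤ 1) : gq μ u = qf μ u := by
  unfold gq
  rw [min_eq_left hu]

lemma gq_mono (hsupp : μ (Set.Ico 0 (2*π))ᶜ = 0) : Monotone (gq μ) :=
  fun _ _ huv => qf_mono hsupp (min_le_min huv le_rfl) (min_le_right _ _)

lemma gq_meas (hsupp : μ (Set.Ico 0 (2*π))ᶜ = 0) : Measurable (gq μ) :=
  (gq_mono hsupp).measurable

lemma gq_nonneg (u : ℝ) : 0 ≤ gq μ u := qf_nonneg _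

lemma gq_lt_two_pi (hsupp : μ (Set.Ico 0 (2*π))ᶜ = 0) {u : ℝ} (hu : u < 1) :
    gq μ u < 2*π := by
  rw [gq_eq hu.le]; exact qf_lt_two_pi hsupp hu

lemma map_gq (hsupp : μ (Set.Ico 0 (2*π))ᶜ = 0) :
    Measure.map (gq μ) (volume.restrict (Set.Ioo 0 1)) = μ := by
  refine (Measure.ext_of_Iic μ _ (fun x => ?_)).symm
  rw [Measure.map_apply (gq_meas hsupp) measurableSet_Iic,
    Measure.restrict_apply ((gq_meas hsupp) measurableSet_Iic)]
  rcases lt_or_ge x 0 with hx | hx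
  · have h1 : gq μ ⁻¹' (Iic x) ∩ Ioo 0 1 = ∅ := by
      ext u
      simp only [mem_inter_iff, mem_preimage, mem_Iic, mem_Ioo, mem_empty_iff_false,
        iff_false, not_and]
      intro hle
      exact absurd (le_trans (gq_nonneg u) hle) (not_le.2 hx)
    have h2 : μ (Iic x) = 0 := by
      apply measure_mono_null _ hsupp
      intro z hz
      simp only [mem_compl_iff, mem_Ico, not_and, not_lt, mem_Iic] at hz ⊢
      intro h0
      linarith
    rw [h1, h2, measure_empty]
  · set c := cdf' μ x with hc
    have hc0 : 0 ≤ c := ENNReal.toReal_nonneg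
    have hc1 : c ≤ 1 := cdf'_le_one x
    have hset : gq μ ⁻¹' (Iic x) ∩ Ioo 0 1 = Iic c ∩ Ioo 0 1 := by
      ext u
      simp only [mem_inter_iff, mem_preimage, mem_Iic, mem_Ioo]
      constructor
      · rintro ⟨h, hu⟩
        rw [gq_eq hu.2.le] at h
        exact ⟨(qf_galois hsupp hx hu.2.le).1 h, hu⟩
      · rintro ⟨h, hu⟩
        rw [gq_eq hu.2.le]
        exact ⟨(qf_galois hsupp hx hu.2.le).2 h, hu⟩
    have hvol : volume (Iic c ∩ Ioo (0:ℝ) 1) = ENNReal.ofReal c := by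
      rcases lt_or_ge c 1 with h | h
      · have : Iic c ∩ Ioo (0:ℝ) 1 = Ioc 0 c := by
          ext u
          simp only [mem_inter_iff, mem_Iic, mem_Ioo, mem_Ioc]
          constructor
          · rintro ⟨h1, h2, h3⟩; exact ⟨h2, h1⟩
          · rintro ⟨h1, h2⟩; exact ⟨h2, h1, lt_of_le_of_lt h2 h⟩
        rw [this, Real.volume_Ioc, sub_zero]
      · have hceq : c = 1 := le_antisymm hc1 h
        have : Iic c ∩ Ioo (0:ℝ) 1 = Ioo 0 1 := by
          apply inter_eq_right.2
          intro u hu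
          exact le_trans hu.2.le (hceq ▸ le_rfl)
        rw [this, Real.volume_Ioo, hceq]
        norm_num
    have hIic : μ (Iic x) = μ (Icc 0 x) := by
      have hsub : Iic x = Iio 0 ∪ Icc 0 x := by
        ext z
        simp only [mem_Iic, mem_union, mem_Iio, mem_Icc]
        constructor
        · intro h
          rcases lt_or_ge z 0 with h' | h'
          · exact Or.inl h'
          · exact Or.inr ⟨h', h⟩
        · rintro (h | h)
          · linarith
          · exact h.2
      have h0 : μ (Iio 0) = 0 := by
        apply measure_mono_null _ hsupp
        intro z hz
        simp only [mem_compl_iff, mem_Ico, not_and, not_lt, mem_Iio] at hz ⊢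
        intro h0
        linarith
      rw [hsub]
      refine le_antisymm (le_trans (measure_union_le _ _) ?_) (measure_mono subset_union_right)
      rw [h0, zero_add]
    rw [hset, hvol, hIic, hc, cdf', ENNReal.ofReal_toReal (measure_ne_top μ _)]

/-! ### Integrability helpers -/

lemma integrableOn_bdd_real {f : ℝ → ℝ} (hf : Measurable f) (hb : ∀ u, ‖f u‖ ≤ 1)
    {s : Set ℝ} (hs : MeasurableSet s) (hfin : volume s ≠ ⊤) :
    IntegrableOn f s volume := by
  refine Integrable.mono' (g := fun _ => (1:ℝ)) (integrableOn_const hfin)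
    hf.aestronglyMeasurable (Filter.Eventually.of_forall hb)

lemma integrableOn_bdd_cx {f : ℝ → ℂ} (hf : Measurable f) (hb : ∀ u, ‖f u‖ ≤ 1)
    {s : Set ℝ} (hs : MeasurableSet s) (hfin : volume s ≠ ⊤) :
    IntegrableOn f s volume := by
  refine Integrable.mono' (g := fun _ => (1:ℝ)) (integrableOn_const hfin)
    hf.aestronglyMeasurable (Filter.Eventually.of_forall hb)

lemma norm_expI (x : ℝ) : ‖Complex.exp (Complex.I * x)‖ = 1 := by
  rw [Complex.norm_exp]
  simp [Complex.mul_re]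

/-! ### Extracting real and imaginary parts -/

lemma re_im_zero {s : Set ℝ} (hs : MeasurableSet s) (hfin : volume s ≠ ⊤)
    {f : ℝ → ℝ} (hf : Measurable f) (φ : ℝ)
    (h0 : (∫ u in s, Complex.exp (Complex.I * (f u : ℂ))) = 0) :
    (∫ u in s, Real.cos (f u - φ)) = 0 ∧ (∫ u in s, Real.sin (f u - φ)) = 0 := by
  have hme : Measurable fun u => f u - φ := hf.sub measurable_const
  have h1 : (∫ u in s, Complex.exp (((f u - φ : ℝ) : ℂ) * Complex.I)) = 0 := by
    have key : ∀ u, Complex.exp (((f u - φ : ℝ) : ℂ) * Complex.I)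
        = Complex.exp (-(φ:ℂ) * Complex.I) * Complex.exp (Complex.I * (f u : ℂ)) := by
      intro u
      rw [← Complex.exp_add]
      congr 1
      push_cast
      ring
    simp only [key]
    rw [integral_const_mul, h0, mul_zero]
  have hcos : IntegrableOn (fun u => Real.cos (f u - φ)) s volume :=
    integrableOn_bdd_real (Real.measurable_cos.comp hme)
      (fun u => by rw [Real.norm_eq_abs]; exact Real.abs_cos_le_one _) hs hfin
  have hsin : IntegrableOn (fun u => Real.sin (f u - φ)) s volume :=
    integrableOn_bdd_real (Real.measurable_sin.comp hme)
      (fun u => by rw [Real.norm_eq_abs]; exact Real.abs_sin_le_one _) hs hfin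
  have hIexp : IntegrableOn (fun u => Complex.exp ((↑(f u - φ) : ℂ) * Complex.I)) s volume :=
    integrableOn_bdd_cx (Complex.measurable_exp.comp
      ((Complex.measurable_ofReal.comp hme).mul_const _))
      (fun u => by
        simp only [Function.comp_apply]
        rw [mul_comm]
        exact le_of_eq (norm_expI _)) hs hfin
  have hre := integral_re (μ := volume.restrict s) hIexp
  have him := integral_im (μ := volume.restrict s) hIexp
  rw [h1] at hre him
  simp only [RCLike.re_to_complex, RCLike.im_to_complex, Complex.exp_ofReal_mul_I_re,
    Complex.exp_ofReal_mul_I_im, Complex.zero_re, Complex.zero_im] at hre him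
  exact ⟨hre, him⟩

lemma width_lemma {s : Set ℝ} (hs : MeasurableSet s) (hfin : volume s ≠ ⊤)
    {f : ℝ → ℝ} (hf : Measurable f) {φ δ : ℝ} (hδ : 0 ≤ δ) (hδ' : δ < π/2)
    (hb : ∀ u ∈ s, |f u - φ| ≤ δ)
    (h0 : (∫ u in s, Complex.exp (Complex.I * (f u : ℂ))) = 0) : volume s = 0 := by
  have hπ := Real.pi_pos
  have hcpos : 0 < Real.cos δ := Real.cos_pos_of_mem_Ioo ⟨by linarith, hδ'⟩
  have hge : ∀ u ∈ s, Real.cos δ ≤ Real.cos (f u - φ) := by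
    intro u hu
    rw [← Real.cos_abs (f u - φ)]
    exact Real.cos_le_cos_of_nonneg_of_le_pi (abs_nonneg _) (by linarith) (hb u hu)
  have hint : IntegrableOn (fun u => Real.cos (f u - φ)) s volume :=
    integrableOn_bdd_real (Real.measurable_cos.comp (hf.sub measurable_const))
      (fun u => by rw [Real.norm_eq_abs]; exact Real.abs_cos_le_one _) hs hfin
  have hlow := setIntegral_ge_of_const_le hs hfin hge hint
  rw [(re_im_zero hs hfin hf φ h0).1] at hlow
  simp only [Measure.real, smul_eq_mul] at hlow
  have : (volume s).toReal = 0 := by nlinarith [ENNReal.toReal_nonneg (a := volume s)]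
  exact (ENNReal.toReal_eq_zero_iff _).1 this |>.resolve_right hfin

lemma cos_ae_zero {s : Set ℝ} (hs : MeasurableSet s) (hfin : volume s ≠ ⊤)
    {f : ℝ → ℝ} (hf : Measurable f) {φ : ℝ} (hb : ∀ u ∈ s, |f u - φ| ≤ π/2)
    (h0 : (∫ u in s, Complex.exp (Complex.I * (f u : ℂ))) = 0) :
    (∀ᵐ u, u ∈ s → Real.cos (f u - φ) = 0) ∧ (∫ u in s, Real.sin (f u - φ)) = 0 := by
  obtain ⟨hcos0, hsin0⟩ := re_im_zero hs hfin hf φ h0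
  have hnn : 0 ≤ᵐ[volume.restrict s] fun u => Real.cos (f u - φ) := by
    rw [Filter.EventuallyLE, ae_restrict_iff' hs]
    refine Filter.Eventually.of_forall (fun u hu => ?_)
    rcases abs_le.1 (hb u hu) with ⟨hl, hr⟩
    exact Real.cos_nonneg_of_mem_Icc ⟨by linarith, hr⟩
  have hint : IntegrableOn (fun u => Real.cos (f u - φ)) s volume :=
    integrableOn_bdd_real (Real.measurable_cos.comp (hf.sub measurable_const))
      (fun u => by rw [Real.norm_eq_abs]; exact Real.abs_cos_le_one _) hs hfin
  have := (integral_eq_zero_iff_of_nonneg_ae hnn hint).1 hcos0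
  refine ⟨?_, hsin0⟩
  have := (ae_restrict_iff' hs).1 this
  filter_upwards [this] with u hu hus
  exact hu hus

lemma cos_zero_pin {x : ℝ} (hb : |x| ≤ π/2) (h : Real.cos x = 0) : x = π/2 ∨ x = -π/2 := by
  have hπ := Real.pi_pos
  obtain ⟨k, hk⟩ := Real.cos_eq_zero_iff.1 h
  rcases abs_le.1 hb with ⟨h1, h2⟩
  have hk1 : (-1:ℝ) ≤ 2*(k:ℝ)+1 := by nlinarith
  have hk2 : (2*(k:ℝ)+1) ≤ 1 := by nlinarith
  have hk1' : (-1:ℤ) ≤ 2*k+1 := by exact_mod_cast hk1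
  have hk2' : (2*k+1 : ℤ) ≤ 1 := by exact_mod_cast hk2
  have : k = 0 ∨ k = -1 := by omega
  rcases this with rfl | rfl
  · left; rw [hk]; push_cast; ring
  · right; rw [hk]; push_cast; ring


/-- The curve `Z_μ(t) = ∫₀^t exp(i F_μ⁻¹(u)) du`. -/
noncomputable def Zc (μ : Measure ℝ) (t : ℝ) : ℂ :=
  ∫ u in (0:ℝ)..t, Complex.exp (Complex.I * (qf μ u))

theorem stmt1 (μ : Measure ℝ) [IsProbabilityMeasure μ]
    (hsupp : μ (Set.Ico 0 (2*π))ᶜ = 0)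
    (hclosed : ∫ x, Complex.exp (Complex.I * x) ∂μ = 0)
    (t₁ t₂ : ℝ) (h1 : t₁ ∈ Set.Ico (0:ℝ) 1) (h2 : t₂ ∈ Set.Ico (0:ℝ) 1)
    (hlt : t₁ < t₂) (heq : Zc μ t₁ = Zc μ t₂) :
    qf μ t₂ = π + qf μ t₁ ∧ μ {qf μ t₁} = 1/2 ∧ μ {qf μ t₂} = 1/2 := by
  have hπ := Real.pi_pos
  obtain ⟨ht10, ht11⟩ := h1
  obtain ⟨ht20, ht21⟩ := h2
  set g := gq μ with hgdef
  have hgm : Measurable g := gq_meas hsupp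
  have hgmono : Monotone g := gq_mono hsupp
  set α := qf μ t₁ with hαdef
  set β := qf μ t₂ with hβdef
  have hgt1 : g t₁ = α := gq_eq ht11.le
  have hgt2 : g t₂ = β := gq_eq ht21.le
  have hα0 : 0 ≤ α := qf_nonneg _
  have hβ2π : β < 2*π := qf_lt_two_pi hsupp ht21
  have hαβ : α ≤ β := by rw [← hgt1, ← hgt2]; exact hgmono hlt.le
  have hg0 : ∀ u, 0 ≤ g u := fun u => qf_nonneg _
  have hg2pi : ∀ u, u < 1 → g u < 2*π := fun u hu => gq_lt_two_pi hsupp hu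
  have hmapg : Measure.map g (volume.restrict (Set.Ioo 0 1)) = μ := map_gq hsupp
  have hgeq : ∀ u, u ≤ 1 → g u = qf μ u := fun u hu => gq_eq hu
  set E : ℝ → ℂ := fun u => Complex.exp (Complex.I * (g u : ℂ)) with hE
  have hEmeas : Measurable E :=
    Complex.measurable_exp.comp ((Complex.measurable_ofReal.comp hgm).const_mul _)
  have hEnorm : ∀ u, ‖E u‖ ≤ 1 := fun u => le_of_eq (norm_expI _)
  have hEint : ∀ {s : Set ℝ}, MeasurableSet s → volume s ≠ ⊤ → IntegrableOn E s volume :=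
    fun hs hfin => integrableOn_bdd_cx hEmeas hEnorm hs hfin
  have hII : ∀ a b : ℝ, IntervalIntegrable E volume a b := by
    intro a b
    rw [intervalIntegrable_iff]
    exact hEint measurableSet_uIoc
      (by rw [show Set.uIoc a b = Set.Ioc (min a b) (max a b) from rfl, Real.volume_Ioc]
          exact ENNReal.ofReal_ne_top)
  have hZc : ∀ t, 0 ≤ t → t ≤ 1 → Zc μ t = ∫ u in (0:ℝ)..t, E u := by
    intro t ht0 ht1
    unfold Zc
    apply intervalIntegral.integral_congr
    intro u hu
    rw [uIcc_of_le ht0] at hu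
    simp only [hE]
    rw [← hgeq u (le_trans hu.2 ht1)]
  have hmid0 : (∫ u in Set.Ioc t₁ t₂, E u) = 0 := by
    have hadd := intervalIntegral.integral_add_adjacent_intervals (hII 0 t₁) (hII t₁ t₂)
    have h12 : (∫ u in (0:ℝ)..t₁, E u) = ∫ u in (0:ℝ)..t₂, E u := by
      rw [← hZc t₁ ht10 ht11.le, ← hZc t₂ ht20 ht21.le]; exact heq
    rw [h12, add_eq_left] at hadd
    rw [← intervalIntegral.integral_of_le hlt.le]
    exact hadd
  have hIoo0 : (∫ u in Set.Ioo (0:ℝ) 1, E u) = 0 := by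
    have hfsm : AEStronglyMeasurable (fun x : ℝ => Complex.exp (Complex.I * (x:ℂ)))
        (Measure.map g (volume.restrict (Set.Ioo 0 1))) :=
      (Complex.continuous_exp.comp (continuous_const.mul
        Complex.continuous_ofReal)).aestronglyMeasurable
    have hmi := integral_map (f := fun x : ℝ => Complex.exp (Complex.I * (x:ℂ)))
      hgm.aemeasurable hfsm
    rw [hmapg, hclosed] at hmi
    exact hmi.symm
  clear_value g
  clear_value α
  clear_value β
  set K : Set ℝ := Set.Ioc 0 t₁ ∪ Set.Ioo t₂ 1 with hKdef
  have hKmeas : MeasurableSet K := measurableSet_Ioc.union measurableSet_Ioo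
  have hKsub : K ⊆ Set.Ioo (0:ℝ) 1 := by
    rintro u (hu | hu)
    · exact ⟨hu.1, lt_of_le_of_lt hu.2 (lt_of_lt_of_le hlt ht21.le)⟩
    · exact ⟨lt_of_le_of_lt ht20 hu.1, hu.2⟩
  have hIoofin : volume (Set.Ioo (0:ℝ) 1) ≠ ⊤ := by
    rw [Real.volume_Ioo]; exact ENNReal.ofReal_ne_top
  have hKfin : volume K ≠ ⊤ := ne_top_of_le_ne_top hIoofin (measure_mono hKsub)
  have hdisj : Disjoint (Set.Ioc 0 t₁) (Set.Ioo t₂ 1) := by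
    rw [Set.disjoint_left]
    intro u hu hu'
    exact absurd (lt_trans hlt hu'.1) (not_lt.2 hu.2)
  have hsplit : Set.Ioo (0:ℝ) 1 = K ∪ Set.Ioc t₁ t₂ := by
    ext u
    constructor
    · rintro ⟨h0, hlt1⟩
      rcases le_or_gt u t₁ with h | h
      · exact Or.inl (Or.inl ⟨h0, h⟩)
      · rcases le_or_gt u t₂ with h' | h'
        · exact Or.inr ⟨h, h'⟩
        · exact Or.inl (Or.inr ⟨h', hlt1⟩)
    · rintro ((h | h) | h)
      · exact ⟨h.1, by linarith [h.2]⟩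
      · exact ⟨by linarith [h.1], h.2⟩
      · exact ⟨by linarith [h.1], by linarith [h.2]⟩
  have hdisj2 : Disjoint K (Set.Ioc t₁ t₂) := by
    rw [Set.disjoint_left]
    rintro u (hu | hu) hu'
    · exact absurd hu'.1 (not_lt.2 hu.2)
    · exact absurd hu.1 (not_lt.2 hu'.2)
  have hmidmeas : MeasurableSet (Set.Ioc t₁ t₂) := measurableSet_Ioc
  have hmidfin : volume (Set.Ioc t₁ t₂) ≠ ⊤ := by
    rw [Real.volume_Ioc]; exact ENNReal.ofReal_ne_top
  have hK0 : (∫ u in K, E u) = 0 := by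
    have hu := setIntegral_union hdisj2 hmidmeas (hEint hKmeas hKfin) (hEint hmidmeas hmidfin)
    rw [← hsplit, hIoo0, hmid0, add_zero] at hu
    exact hu.symm
  have hg_mid : ∀ u ∈ Set.Ioc t₁ t₂, α ≤ g u ∧ g u ≤ β := fun u hu =>
    ⟨hgt1 ▸ hgmono hu.1.le, hgt2 ▸ hgmono hu.2⟩
  have hg_left : ∀ u ∈ Set.Ioc 0 t₁, 0 ≤ g u ∧ g u ≤ α := fun u hu =>
    ⟨hg0 u, hgt1 ▸ hgmono hu.2⟩
  have hg_right : ∀ u ∈ Set.Ioo t₂ 1, β ≤ g u ∧ g u < 2*π := fun u hu =>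
    ⟨hgt2 ▸ hgmono hu.1.le, hg2pi u hu.2⟩
  have hclaim1 : α + π ≤ β := by
    by_contra hcon
    push_neg at hcon
    have hvol := width_lemma hmidmeas hmidfin hgm (φ := (α+β)/2) (δ := (β-α)/2)
      (by linarith) (by linarith)
      (fun u hu => by
        obtain ⟨hl, hr⟩ := hg_mid u hu
        rw [abs_le]
        constructor <;> linarith) hmid0
    rw [Real.volume_Ioc] at hvol
    have := ENNReal.ofReal_eq_zero.1 hvol
    linarith
  set θ : ℝ → ℝ := fun u => g u + (if u ≤ t₁ then 2*π else 0) with hθdef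
  have hθmeas : Measurable θ :=
    hgm.add (Measurable.ite measurableSet_Iic measurable_const measurable_const)
  have hEθ : ∀ u, Complex.exp (Complex.I * (θ u : ℂ)) = E u := by
    intro u
    simp only [hθdef, hE]
    split
    · have hcast : (Complex.I * ((g u + 2*π : ℝ) : ℂ)) =
          Complex.I * (g u : ℂ) + 2*π*Complex.I := by push_cast; ring
      rw [hcast, Complex.exp_add, Complex.exp_two_pi_mul_I, mul_one]
    · rw [add_zero]
  have hθK0 : (∫ u in K, Complex.exp (Complex.I * (θ u : ℂ))) = 0 := by
    simp only [hEθ]; exact hK0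
  clear_value θ
  have hθbounds : ∀ u ∈ K, β ≤ θ u ∧ θ u ≤ α + 2*π := by
    rintro u (hu | hu)
    · obtain ⟨h0, hα'⟩ := hg_left u hu
      simp only [hθdef]
      rw [if_pos hu.2]
      constructor <;> linarith
    · obtain ⟨hβ', h2π⟩ := hg_right u hu
      simp only [hθdef]
      rw [if_neg (not_le.2 (lt_trans hlt hu.1))]
      constructor <;> linarith
  have hclaim2 : β = α + π := by
    refine le_antisymm ?_ hclaim1
    by_contra hcon
    push_neg at hcon
    have hvol := width_lemma hKmeas hKfin hθmeas (φ := (β + α + 2*π)/2) (δ := (α + 2*π - β)/2)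
      (by linarith) (by linarith)
      (fun u hu => by
        obtain ⟨hl, hr⟩ := hθbounds u hu
        rw [abs_le]
        constructor <;> linarith) hθK0
    have hv2 : volume (Set.Ioo t₂ 1) = 0 := measure_mono_null subset_union_right hvol
    rw [Real.volume_Ioo] at hv2
    have := ENNReal.ofReal_eq_zero.1 hv2
    linarith
  obtain ⟨hcosK, hsinK⟩ := cos_ae_zero hKmeas hKfin hθmeas (φ := α + 3*π/2)
    (fun u hu => by
      obtain ⟨hl, hr⟩ := hθbounds u hu
      rw [abs_le]
      constructor <;> linarith [hclaim2]) hθK0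
  have hKae : ∀ᵐ u, u ∈ K →
      ((u ∈ Set.Ioc 0 t₁ → g u = α ∧ θ u - (α + 3*π/2) = π/2) ∧
       (u ∈ Set.Ioo t₂ 1 → g u = β ∧ θ u - (α + 3*π/2) = -(π/2))) := by
    filter_upwards [hcosK] with u hu huK
    obtain ⟨hl, hr⟩ := hθbounds u huK
    have hb' : |θ u - (α + 3*π/2)| ≤ π/2 := by
      rw [abs_le]
      constructor <;> linarith [hclaim2]
    have hpin := cos_zero_pin hb' (hu huK)
    constructor
    · intro hu1
      have hθu : θ u = g u + 2*π := by simp only [hθdef]; rw [if_pos hu1.2]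
      obtain ⟨h0, hα'⟩ := hg_left u hu1
      rcases hpin with h | h
      · constructor <;> linarith
      · exfalso; linarith
    · intro hu2
      have hθu : θ u = g u := by
        simp only [hθdef]
        rw [if_neg (not_le.2 (lt_trans hlt hu2.1)), add_zero]
      obtain ⟨hβ', h2π⟩ := hg_right u hu2
      rcases hpin with h | h
      · exfalso; linarith
      · constructor <;> linarith [hclaim2]
  have hsin_s : ∀ᵐ u, u ∈ K →
      Real.sin (θ u - (α + 3*π/2)) = (if u ≤ t₁ then (1:ℝ) else -1) := by
    filter_upwards [hKae] with u hu huK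
    rcases huK with hu1 | hu2
    · rw [if_pos hu1.2, (hu (Or.inl hu1)).1 hu1 |>.2, Real.sin_pi_div_two]
    · rw [if_neg (not_le.2 (lt_trans hlt hu2.1)), (hu (Or.inr hu2)).2 hu2 |>.2,
        Real.sin_neg, Real.sin_pi_div_two]
  have hsint : (∫ u in K, (if u ≤ t₁ then (1:ℝ) else -1)) = 0 := by
    rw [← setIntegral_congr_ae hKmeas hsin_s]
    exact hsinK
  have hsmeas : Measurable (fun u : ℝ => if u ≤ t₁ then (1:ℝ) else -1) :=
    Measurable.ite measurableSet_Iic measurable_const measurable_const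
  have hsbd : ∀ u : ℝ, ‖if u ≤ t₁ then (1:ℝ) else -1‖ ≤ 1 := by
    intro u; split <;> simp
  have hKvalsplit : (∫ u in K, (if u ≤ t₁ then (1:ℝ) else -1)) = t₁ - (1 - t₂) := by
    have hfin1 : volume (Set.Ioc (0:ℝ) t₁) ≠ ⊤ := by
      rw [Real.volume_Ioc]; exact ENNReal.ofReal_ne_top
    have hfin2 : volume (Set.Ioo t₂ (1:ℝ)) ≠ ⊤ := by
      rw [Real.volume_Ioo]; exact ENNReal.ofReal_ne_top
    rw [hKdef, setIntegral_union hdisj measurableSet_Ioo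
      (integrableOn_bdd_real hsmeas hsbd measurableSet_Ioc hfin1)
      (integrableOn_bdd_real hsmeas hsbd measurableSet_Ioo hfin2)]
    have e1 : (∫ u in Set.Ioc (0:ℝ) t₁, (if u ≤ t₁ then (1:ℝ) else -1))
        = ∫ _ in Set.Ioc (0:ℝ) t₁, (1:ℝ) :=
      setIntegral_congr_fun measurableSet_Ioc (fun u hu => if_pos hu.2)
    have e2 : (∫ u in Set.Ioo t₂ (1:ℝ), (if u ≤ t₁ then (1:ℝ) else -1))
        = ∫ _ in Set.Ioo t₂ (1:ℝ), (-1:ℝ) :=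
      setIntegral_congr_fun measurableSet_Ioo
        (fun u hu => if_neg (not_le.2 (lt_trans hlt hu.1)))
    rw [e1, e2, setIntegral_const, setIntegral_const, measureReal_def, measureReal_def, Real.volume_Ioc, Real.volume_Ioo,
      ENNReal.toReal_ofReal (by linarith), ENNReal.toReal_ofReal (by linarith)]
    simp
    ring
  have htt : t₁ + t₂ = 1 := by
    rw [hsint] at hKvalsplit
    linarith
  obtain ⟨hcosM, hsinM⟩ := cos_ae_zero hmidmeas hmidfin hgm (φ := α + π/2)
    (fun u hu => by
      obtain ⟨hl, hr⟩ := hg_mid u hu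
      rw [abs_le]
      constructor <;> linarith [hclaim2]) hmid0
  have hβα : β ≠ α := by rw [hclaim2]; intro hc; linarith
  have hMae : ∀ᵐ u, u ∈ Set.Ioc t₁ t₂ → (g u = α ∨ g u = β) ∧
      Real.sin (g u - (α + π/2)) = (if g u = α then (-1:ℝ) else 1) := by
    filter_upwards [hcosM] with u hu huM
    obtain ⟨hl, hr⟩ := hg_mid u huM
    have hb' : |g u - (α + π/2)| ≤ π/2 := by
      rw [abs_le]
      constructor <;> linarith [hclaim2]
    rcases cos_zero_pin hb' (hu huM) with h | h
    · have hgβ : g u = β := by linarith [hclaim2]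
      have hgnα : ¬ g u = α := by rw [hgβ]; exact hβα
      refine ⟨Or.inr hgβ, ?_⟩
      rw [if_neg hgnα, h, Real.sin_pi_div_two]
    · have hgα : g u = α := by linarith
      refine ⟨Or.inl hgα, ?_⟩
      have h' : g u - (α + π/2) = -(π/2) := by linarith
      rw [if_pos hgα, h', Real.sin_neg, Real.sin_pi_div_two]
  set A : Set ℝ := Set.Ioc t₁ t₂ ∩ g ⁻¹' {α} with hAdef
  have hAmeas : MeasurableSet A := hmidmeas.inter (hgm (measurableSet_singleton _))
  have hAsub : A ⊆ Set.Ioc t₁ t₂ := inter_subset_left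
  have hAfin : volume A ≠ ⊤ := ne_top_of_le_ne_top hmidfin (measure_mono hAsub)
  set a := (volume A).toReal with hadef
  have ha0 : 0 ≤ a := ENNReal.toReal_nonneg
  have havolA : volume A = ENNReal.ofReal a := (ENNReal.ofReal_toReal hAfin).symm
  clear_value a
  have hrmeas : Measurable (fun u : ℝ => if g u = α then (-1:ℝ) else 1) :=
    Measurable.ite (hgm (measurableSet_singleton _)) measurable_const measurable_const
  have hrbd : ∀ u : ℝ, ‖if g u = α then (-1:ℝ) else 1‖ ≤ 1 := by
    intro u; split <;> simp
  have hrM : (∫ u in Set.Ioc t₁ t₂, (if g u = α then (-1:ℝ) else 1)) = 0 := by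
    rw [← setIntegral_congr_ae hmidmeas (by filter_upwards [hMae] with u hu huM
      using (hu huM).2)]
    exact hsinM
  have hdiffmeas : MeasurableSet (Set.Ioc t₁ t₂ \ A) := hmidmeas.diff hAmeas
  have hdifffin : volume (Set.Ioc t₁ t₂ \ A) ≠ ⊤ :=
    ne_top_of_le_ne_top hmidfin (measure_mono diff_subset)
  have hsplitr := setIntegral_union (f := fun u : ℝ => if g u = α then (-1:ℝ) else 1)
    (disjoint_sdiff_right) hdiffmeas
    (integrableOn_bdd_real hrmeas hrbd hAmeas hAfin)
    (integrableOn_bdd_real hrmeas hrbd hdiffmeas hdifffin)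
  rw [union_diff_cancel hAsub] at hsplitr
  have hintA : (∫ u in A, (if g u = α then (-1:ℝ) else 1)) = -a := by
    rw [setIntegral_congr_fun hAmeas (fun u hu => if_pos (show g u = α from hu.2)),
      setIntegral_const]
    simp [hadef, measureReal_def]
  have hintD : (∫ u in Set.Ioc t₁ t₂ \ A, (if g u = α then (-1:ℝ) else 1))
      = (t₂ - t₁) - a := by
    have hne : ∀ u ∈ Set.Ioc t₁ t₂ \ A, ¬ g u = α := by
      rintro u ⟨huM, huA⟩ hc
      exact huA ⟨huM, hc⟩
    rw [setIntegral_congr_fun hdiffmeas (fun u hu => if_neg (hne u hu)), setIntegral_const, measureReal_def,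
      measure_diff hAsub hAmeas.nullMeasurableSet hAfin,
      ENNReal.toReal_sub_of_le (measure_mono hAsub) hmidfin, Real.volume_Ioc,
      ENNReal.toReal_ofReal (by linarith)]
    simp [hadef]
  have haval : a = (t₂ - t₁)/2 := by
    rw [hrM, hintA, hintD] at hsplitr
    linarith
  set B : Set ℝ := Set.Ioc t₁ t₂ ∩ g ⁻¹' {β} with hBdef
  have hBmeas : MeasurableSet B := hmidmeas.inter (hgm (measurableSet_singleton _))
  have hBsub : B ⊆ Set.Ioc t₁ t₂ := inter_subset_left
  have hBfin : volume B ≠ ⊤ := ne_top_of_le_ne_top hmidfin (measure_mono hBsub)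
  set b := (volume B).toReal with hbdef
  have hb0 : 0 ≤ b := ENNReal.toReal_nonneg
  have hbvolB : volume B = ENNReal.ofReal b := (ENNReal.ofReal_toReal hBfin).symm
  clear_value b
  have hABdisj : Disjoint A B := by
    rw [Set.disjoint_left]
    rintro u ⟨_, hu1⟩ ⟨_, hu2⟩
    simp only [mem_preimage, mem_singleton_iff] at hu1 hu2
    exact hβα (hu2 ▸ hu1 ▸ rfl)
  have hmidAB : (Set.Ioc t₁ t₂ : Set ℝ) =ᵐ[volume] (A ∪ B : Set ℝ) := by
    rw [Filter.eventuallyEq_set]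
    filter_upwards [hMae] with u hu
    constructor
    · intro huM
      rcases (hu huM).1 with h | h
      · exact Or.inl ⟨huM, by simp [h]⟩
      · exact Or.inr ⟨huM, by simp [h]⟩
    · rintro (h | h) <;> exact h.1
  have hbval : b = (t₂ - t₁)/2 := by
    have hv := measure_congr hmidAB
    rw [measure_union hABdisj hBmeas] at hv
    have := congrArg ENNReal.toReal hv
    rw [Real.volume_Ioc, ENNReal.toReal_ofReal (by linarith),
      ENNReal.toReal_add hAfin hBfin] at this
    rw [← hadef, ← hbdef] at this
    linarith
  have hmap : ∀ x : ℝ, μ {x} = volume (g ⁻¹' {x} ∩ Set.Ioo 0 1) := by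
    intro x
    rw [← hmapg, Measure.map_apply hgm (measurableSet_singleton x),
      Measure.restrict_apply (hgm (measurableSet_singleton x))]
  have hhalf : ENNReal.ofReal (1/2 : ℝ) = (1/2 : ENNReal) := by
    rw [ENNReal.ofReal_div_of_pos (by norm_num), ENNReal.ofReal_one, ENNReal.ofReal_ofNat]
  have hSα : (g ⁻¹' {α} ∩ Set.Ioo 0 1 : Set ℝ) =ᵐ[volume] (Set.Ioc 0 t₁ ∪ A : Set ℝ) := by
    rw [Filter.eventuallyEq_set]
    filter_upwards [hKae, hMae] with u hK' hM'
    constructor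
    · rintro ⟨hgu, hu01⟩
      simp only [mem_preimage, mem_singleton_iff] at hgu
      rcases le_or_gt u t₁ with h | h
      · exact Or.inl ⟨hu01.1, h⟩
      · rcases le_or_gt u t₂ with h' | h'
        · exact Or.inr ⟨⟨h, h'⟩, by simp [hgu]⟩
        · exfalso
          have hmem : u ∈ Set.Ioo t₂ 1 := ⟨h', hu01.2⟩
          have := ((hK' (Or.inr hmem)).2 hmem).1
          rw [hgu] at this
          exact hβα this.symm
    · rintro (h | h)
      · have := ((hK' (Or.inl h)).1 h).1
        exact ⟨by simp [this], ⟨h.1, by linarith [h.2]⟩⟩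
      · exact ⟨h.2, ⟨by linarith [h.1.1], by linarith [h.1.2]⟩⟩
  have hdisjA2 : Disjoint (Set.Ioc 0 t₁) A := by
    rw [Set.disjoint_left]
    rintro u hu ⟨hu', _⟩
    exact absurd hu'.1 (not_lt.2 hu.2)
  have hμα : μ {α} = 1/2 := by
    rw [hmap α, measure_congr hSα, measure_union hdisjA2 hAmeas, Real.volume_Ioc,
      havolA,
      ← ENNReal.ofReal_add (by linarith) ha0, ← hhalf]
    congr 1
    rw [haval]
    linarith
  have hSβ : (g ⁻¹' {β} ∩ Set.Ioo 0 1 : Set ℝ) =ᵐ[volume] (Set.Ioo t₂ 1 ∪ B : Set ℝ) := by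
    rw [Filter.eventuallyEq_set]
    filter_upwards [hKae, hMae] with u hK' hM'
    constructor
    · rintro ⟨hgu, hu01⟩
      simp only [mem_preimage, mem_singleton_iff] at hgu
      rcases le_or_gt u t₁ with h | h
      · exfalso
        have hmem : u ∈ Set.Ioc 0 t₁ := ⟨hu01.1, h⟩
        have := ((hK' (Or.inl hmem)).1 hmem).1
        rw [hgu] at this
        exact hβα this
      · rcases le_or_gt u t₂ with h' | h'
        · exact Or.inr ⟨⟨h, h'⟩, by simp [hgu]⟩
        · exact Or.inl ⟨h', hu01.2⟩
    · rintro (h | h)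
      · have := (hK' (Or.inr h)).2 h
        exact ⟨by simp [this.1], ⟨by linarith [h.1], h.2⟩⟩
      · exact ⟨h.2, ⟨by linarith [h.1.1], by linarith [h.1.2]⟩⟩
  have hdisjB2 : Disjoint (Set.Ioo t₂ 1) B := by
    rw [Set.disjoint_left]
    rintro u hu ⟨hu', _⟩
    exact absurd hu.1 (not_lt.2 hu'.2)
  have hμβ : μ {β} = 1/2 := by
    rw [hmap β, measure_congr hSβ, measure_union hdisjB2 hBmeas, Real.volume_Ioo,
      hbvolB,
      ← ENNReal.ofReal_add (by linarith) hb0, ← hhalf]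
    congr 1
    rw [hbval]
    linarith
  exact ⟨by rw [hclaim2, add_comm], hμα, hμβ⟩
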